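/- Let N, M be positive integers, ε > 0, C ∈ ℝ^{N×M}, and let μ ∈ ℝ^N, γ ∈ ℝ^M have strictly positive entries with Σ_{n=1}^N μ_n = 1 and Σ_{m=1}^M γ_m = 1. Let Π(μ,γ) = { π ∈ ℝ_{≥0}^{N×M} : Σ_m π_{nm} = μ_n for all n, Σ_n π_{nm} = γ_m for all m }. Then, with the convention 0·log 0 = 0, the minimum over π ∈ Π(μ,γ) of Σ_{n,m} C_{nm} π_{nm} + ε·Σ_{n,m} π_{nm}( log( π_{nm}/(μ_n γ_m) ) − 1 ) is attained, and it equals sup_{u ∈ ℝ^N, v ∈ ℝ^M} [ Σ_n u_n μ_n + Σ_m v_m γ_m − ε·Σ_{n,m} μ_n γ_m · exp( (u_n + v_m − C_{nm})/ε ) ]. -/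

import Mathlib

open Finset

private lemma aux_pw {x b s : ℝ} (hx : 0 ≤ x) (hb : 0 < b) :
    x * s ≤ x * Real.log (x / b) - x + b * Real.exp s := by
  rcases hx.eq_or_lt with h | h
  · simp [← h]
    positivity
  · set t := Real.log (x / b) with ht
    have hxb : x / b = Real.exp t := (Real.exp_log (by positivity)).symm
    have hx' : x = b * Real.exp t := by
      rw [← hxb]; field_simp
    have hkey : Real.exp t * ((s - t) + 1) ≤ Real.exp s := by
      have h1 := Real.add_one_le_exp (s - t)
      have h2 : Real.exp t * ((s - t) + 1) ≤ Real.exp t * Real.exp (s - t) :=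
        mul_le_mul_of_nonneg_left h1 (Real.exp_pos t).le
      have h3 : t + (s - t) = s := by ring
      rwa [← Real.exp_add, h3] at h2
    have key2 : b * (Real.exp t * ((s - t) + 1)) ≤ b * Real.exp s :=
      mul_le_mul_of_nonneg_left hkey hb.le
    rw [hx']
    nlinarith [key2]

private lemma eta_seg {x y t : ℝ} (hx : 0 ≤ x) (hy : 0 < y) (ht0 : 0 < t) (ht1 : t ≤ 1) :
    (x + t * (y - x)) * Real.log (x + t * (y - x)) ≤
      x * Real.log x + t * (y * Real.log y - x * Real.log x)
        + (if x = 0 then t * y * Real.log t else 0) := by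
  rcases eq_or_ne x 0 with h | h
  · subst h
    have h1 : (0:ℝ) + t * (y - 0) = t * y := by ring
    rw [h1, Real.log_mul ht0.ne' hy.ne', if_pos rfl]
    exact le_of_eq (by ring)
  · simp only [if_neg h, add_zero]
    have hcvx := Real.convexOn_mul_log.2 (Set.mem_Ici.2 hx) (Set.mem_Ici.2 hy.le)
      (by linarith : (0:ℝ) ≤ 1 - t) ht0.le (by ring)
    simp only [smul_eq_mul] at hcvx
    have h2 : (1 - t) * x + t * y = x + t * (y - x) := by ring
    rw [h2] at hcvx
    linarith [hcvx]

private lemma exists_delta {ι κ : Type*} [Fintype ι] [Fintype κ] [DecidableEq ι] [DecidableEq κ]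
    (n n₀ : ι) (m m₀ : κ) :
    ∃ δ : ι → κ → ℝ, (∀ i j, |δ i j| ≤ 2)
      ∧ (∀ i, ∑ j, δ i j = 0) ∧ (∀ j, ∑ i, δ i j = 0)
      ∧ (∀ G : ι → κ → ℝ,
          (∑ i, ∑ j, δ i j * G i j) = G n m + G n₀ m₀ - (G n m₀ + G n₀ m)) := by
  classical
  refine ⟨fun i j =>
    ((if i = n ∧ j = m then (1:ℝ) else 0) + (if i = n₀ ∧ j = m₀ then (1:ℝ) else 0))
      - ((if i = n ∧ j = m₀ then (1:ℝ) else 0) + (if i = n₀ ∧ j = m then (1:ℝ) else 0)),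
    ?_, ?_, ?_, ?_⟩
  · intro i j
    beta_reduce
    have hI : ∀ (P : Prop) (_ : Decidable P),
        0 ≤ (if P then (1:ℝ) else 0) ∧ (if P then (1:ℝ) else 0) ≤ 1 := by
      intro P _; constructor <;> split_ifs <;> norm_num
    have h1 := hI (i = n ∧ j = m) inferInstance
    have h2 := hI (i = n₀ ∧ j = m₀) inferInstance
    have h3 := hI (i = n ∧ j = m₀) inferInstance
    have h4 := hI (i = n₀ ∧ j = m) inferInstance
    rw [abs_le]
    constructor
    · linarith [h1.1, h1.2, h2.1, h2.2, h3.1, h3.2, h4.1, h4.2]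
    · linarith [h1.1, h1.2, h2.1, h2.2, h3.1, h3.2, h4.1, h4.2]
  · intro i
    have hrow1 : ∀ (a : ι) (b : κ), (∑ j, if i = a ∧ j = b then (1:ℝ) else 0)
        = if i = a then 1 else 0 := by
      intro a b
      by_cases h : i = a
      · simp [h, Finset.sum_ite_eq']
      · simp [h]
    rw [Finset.sum_sub_distrib, Finset.sum_add_distrib, Finset.sum_add_distrib,
      hrow1 n m, hrow1 n₀ m₀, hrow1 n m₀, hrow1 n₀ m]
    ring
  · intro j
    have hcol1 : ∀ (a : ι) (b : κ), (∑ i, if i = a ∧ j = b then (1:ℝ) else 0)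
        = if j = b then 1 else 0 := by
      intro a b
      by_cases h : j = b
      · simp [h, Finset.sum_ite_eq']
      · simp [h]
    rw [Finset.sum_sub_distrib, Finset.sum_add_distrib, Finset.sum_add_distrib,
      hcol1 n m, hcol1 n₀ m₀, hcol1 n m₀, hcol1 n₀ m]
    ring
  · intro G
    have hsingle : ∀ (a : ι) (b : κ),
        (∑ i, ∑ j, (if i = a ∧ j = b then G i j else 0)) = G a b := by
      intro a b
      rw [Finset.sum_eq_single a]
      · rw [Finset.sum_eq_single b]
        · simp
        · intro j _ hj; simp [hj]
        · intro h; exact absurd (Finset.mem_univ b) h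
      · intro i _ hi; simp [hi]
      · intro h; exact absurd (Finset.mem_univ a) h
    simp only [sub_mul, add_mul, ite_mul, one_mul, zero_mul]
    rw [Finset.sum_congr rfl fun i _ => Finset.sum_sub_distrib _ _,
      Finset.sum_sub_distrib,
      Finset.sum_congr rfl fun i _ => (Finset.sum_add_distrib :
        _ = (∑ j, if i = n ∧ j = m then G i j else 0) + ∑ j, if i = n₀ ∧ j = m₀ then G i j else 0),
      Finset.sum_congr rfl fun i _ => (Finset.sum_add_distrib :
        _ = (∑ j, if i = n ∧ j = m₀ then G i j else 0) + ∑ j, if i = n₀ ∧ j = m then G i j else 0),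
      Finset.sum_add_distrib, Finset.sum_add_distrib,
      hsingle n m, hsingle n₀ m₀, hsingle n m₀, hsingle n₀ m]

set_option maxHeartbeats 2000000 in
theorem stmt_15 {N M : ℕ} (hN : 0 < N) (hM : 0 < M) (ε : ℝ) (hε : 0 < ε)
    (C : Matrix (Fin N) (Fin M) ℝ) (μ : Fin N → ℝ) (γ : Fin M → ℝ)
    (hμ : ∀ n, 0 < μ n) (hγ : ∀ m, 0 < γ m)
    (hμ1 : ∑ n, μ n = 1) (hγ1 : ∑ m, γ m = 1) :
    ∃ π : Fin N → Fin M → ℝ,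
      ((∀ n m, 0 ≤ π n m) ∧ (∀ n, ∑ m, π n m = μ n) ∧ (∀ m, ∑ n, π n m = γ m)) ∧
      (∀ π' : Fin N → Fin M → ℝ,
        (∀ n m, 0 ≤ π' n m) → (∀ n, ∑ m, π' n m = μ n) → (∀ m, ∑ n, π' n m = γ m) →
        (∑ n, ∑ m, C n m * π n m) +
            ε * ∑ n, ∑ m, π n m * (Real.log (π n m / (μ n * γ m)) - 1) ≤
          (∑ n, ∑ m, C n m * π' n m) +
            ε * ∑ n, ∑ m, π' n m * (Real.log (π' n m / (μ n * γ m)) - 1)) ∧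
      (∑ n, ∑ m, C n m * π n m) +
          ε * ∑ n, ∑ m, π n m * (Real.log (π n m / (μ n * γ m)) - 1) =
        sSup (Set.range fun uv : (Fin N → ℝ) × (Fin M → ℝ) =>
          (∑ n, uv.1 n * μ n) + (∑ m, uv.2 m * γ m) -
            ε * ∑ n, ∑ m, μ n * γ m * Real.exp ((uv.1 n + uv.2 m - C n m) / ε)) := by
  classical
  have hb : ∀ n m, 0 < μ n * γ m := fun n m => mul_pos (hμ n) (hγ m)
  set D : ((Fin N → ℝ) × (Fin M → ℝ)) → ℝ := fun uv =>
    (∑ n, uv.1 n * μ n) + (∑ m, uv.2 m * γ m) -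
      ε * ∑ n, ∑ m, μ n * γ m * Real.exp ((uv.1 n + uv.2 m - C n m) / ε) with hD
  set f : (Fin N → Fin M → ℝ) → ℝ := fun p =>
    ∑ n, ∑ m, (C n m * p n m
      + ε * (p n m * Real.log (p n m) - p n m * (Real.log (μ n * γ m) + 1))) with hfdef
  have hterm : ∀ (n : Fin N) (m : Fin M) (x : ℝ),
      x * (Real.log (x / (μ n * γ m)) - 1)
        = x * Real.log x - x * (Real.log (μ n * γ m) + 1) := by
    intro n m x
    rcases eq_or_ne x 0 with h | h
    · simp [h]
    · rw [Real.log_div h (hb n m).ne']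
      ring
  have hf_eq : ∀ p : Fin N → Fin M → ℝ,
      (∑ n, ∑ m, C n m * p n m)
        + ε * ∑ n, ∑ m, p n m * (Real.log (p n m / (μ n * γ m)) - 1) = f p := by
    intro p
    simp only [hfdef]
    rw [Finset.mul_sum, ← Finset.sum_add_distrib]
    refine Finset.sum_congr rfl fun n _ => ?_
    rw [Finset.mul_sum, ← Finset.sum_add_distrib]
    refine Finset.sum_congr rfl fun m _ => ?_
    rw [hterm n m (p n m)]
  set S : Set (Fin N → Fin M → ℝ) :=
    {p | (∀ n m, 0 ≤ p n m) ∧ (∀ n, ∑ m, p n m = μ n) ∧ (∀ m, ∑ n, p n m = γ m)} with hSdef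
  have hmemS : ∀ p : Fin N → Fin M → ℝ,
      p ∈ S ↔ ((∀ n m, 0 ≤ p n m) ∧ (∀ n, ∑ m, p n m = μ n) ∧ (∀ m, ∑ n, p n m = γ m)) := by
    intro p; rw [hSdef]; exact Iff.rfl
  have hπ0S : (fun n m => μ n * γ m) ∈ S := by
    rw [hmemS]
    refine ⟨fun n m => (hb n m).le, fun n => ?_, fun m => ?_⟩
    · rw [← Finset.mul_sum, hγ1, mul_one]
    · rw [← Finset.sum_mul, hμ1, one_mul]
  have hSne : S.Nonempty := ⟨_, hπ0S⟩
  have hev : ∀ (n : Fin N) (m : Fin M), Continuous fun p : Fin N → Fin M → ℝ => p n m :=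
    fun n m => (continuous_apply m).comp (continuous_apply n)
  have hSclosed : IsClosed S := by
    rw [hSdef]
    have h1 : IsClosed {p : Fin N → Fin M → ℝ | ∀ n m, 0 ≤ p n m} := by
      simp only [Set.setOf_forall]
      exact isClosed_iInter fun n => isClosed_iInter fun m =>
        isClosed_le continuous_const (hev n m)
    have h2 : IsClosed {p : Fin N → Fin M → ℝ | ∀ n, ∑ m, p n m = μ n} := by
      simp only [Set.setOf_forall]
      exact isClosed_iInter fun n =>
        isClosed_eq (continuous_finset_sum _ fun m _ => hev n m) continuous_const
    have h3 : IsClosed {p : Fin N → Fin M → ℝ | ∀ m, ∑ n, p n m = γ m} := by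
      simp only [Set.setOf_forall]
      exact isClosed_iInter fun m =>
        isClosed_eq (continuous_finset_sum _ fun n _ => hev n m) continuous_const
    exact (h1.inter (h2.inter h3))
  have hScpt : IsCompact S := by
    refine IsCompact.of_isClosed_subset
      (isCompact_Icc (a := fun _ _ => (0:ℝ)) (b := fun _ _ => 1)) hSclosed ?_
    intro p hp
    rw [hmemS] at hp
    obtain ⟨hp0, hp1, _⟩ := hp
    simp only [Set.mem_Icc, Pi.le_def]
    refine ⟨fun n m => hp0 n m, fun n m => ?_⟩
    calc p n m ≤ ∑ m', p n m' :=
          Finset.single_le_sum (fun m' _ => hp0 n m') (Finset.mem_univ m)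
      _ = μ n := hp1 n
      _ ≤ ∑ n', μ n' := Finset.single_le_sum (fun n' _ => (hμ n').le) (Finset.mem_univ n)
      _ = 1 := hμ1
  have hfc : Continuous f := by
    rw [hfdef]
    apply continuous_finset_sum
    intro n _
    apply continuous_finset_sum
    intro m _
    exact (continuous_const.mul (hev n m)).add
      (continuous_const.mul ((Real.continuous_mul_log.comp (hev n m)).sub
        ((hev n m).mul continuous_const)))
  obtain ⟨π, hπS, hπmin'⟩ := hScpt.exists_isMinOn hSne hfc.continuousOn
  have hπmin : ∀ p ∈ S, f π ≤ f p := fun p hp => hπmin' hp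
  have hπS' := hπS
  rw [hmemS] at hπS'
  obtain ⟨hπ0', hπrow, hπcol⟩ := hπS'
  -- strict positivity of the minimizer
  have hπpos : ∀ n m, 0 < π n m := by
    by_contra hcon
    push_neg at hcon
    obtain ⟨n0, m0, hn0m0⟩ := hcon
    have hz : π n0 m0 = 0 := le_antisymm hn0m0 (hπ0' n0 m0)
    set K : ℝ := ∑ n, ∑ m, (C n m * (μ n * γ m - π n m)
      + ε * ((μ n * γ m) * Real.log (μ n * γ m) - π n m * Real.log (π n m)
          - (μ n * γ m - π n m) * (Real.log (μ n * γ m) + 1))) with hK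
    set B0 : ℝ := ∑ n, ∑ m, (if π n m = 0 then μ n * γ m else 0) with hB0
    have hite : ∀ n m, (0:ℝ) ≤ (if π n m = 0 then μ n * γ m else 0) := by
      intro n m; split
      · exact (hb n m).le
      · exact le_refl 0
    have hB0pos : 0 < B0 := by
      have h1 : μ n0 * γ m0 ≤ ∑ m, (if π n0 m = 0 then μ n0 * γ m else 0) := by
        have := Finset.single_le_sum (f := fun m => if π n0 m = 0 then μ n0 * γ m else 0)
          (fun m _ => hite n0 m) (Finset.mem_univ m0)
        simpa [hz] using this
      have h2 : (∑ m, (if π n0 m = 0 then μ n0 * γ m else 0)) ≤ B0 := by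
        rw [hB0]
        exact Finset.single_le_sum (f := fun n => ∑ m, (if π n m = 0 then μ n * γ m else 0))
          (fun n _ => Finset.sum_nonneg fun m _ => hite n m) (Finset.mem_univ n0)
      have := hb n0 m0
      linarith
    set t : ℝ := min (1/2) (Real.exp (-(|K| + 1) / (ε * B0))) with htdef
    have ht0 : 0 < t := lt_min (by norm_num) (Real.exp_pos _)
    have ht1 : t ≤ 1 := le_trans (min_le_left _ _) (by norm_num)
    have hlogt : Real.log t ≤ -(|K| + 1) / (ε * B0) := by
      calc Real.log t ≤ Real.log (Real.exp (-(|K| + 1) / (ε * B0))) :=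
            Real.log_le_log ht0 (min_le_right _ _)
        _ = -(|K| + 1) / (ε * B0) := Real.log_exp _
    set q : Fin N → Fin M → ℝ := fun n m => π n m + t * (μ n * γ m - π n m) with hq
    have hqS : q ∈ S := by
      rw [hmemS]
      refine ⟨fun n m => ?_, fun n => ?_, fun m => ?_⟩
      · have h1 := hπ0' n m; have h2 := hb n m
        have h3 : q n m = (1 - t) * π n m + t * (μ n * γ m) := by rw [hq]; ring
        rw [h3]
        have h4 : 0 ≤ (1 - t) * π n m := mul_nonneg (by linarith) h1
        nlinarith [mul_pos ht0 h2]
      · simp only [hq]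
        rw [Finset.sum_add_distrib, hπrow n, ← Finset.mul_sum, Finset.sum_sub_distrib,
          ← Finset.mul_sum, hγ1, hπrow n]
        ring
      · simp only [hq]
        rw [Finset.sum_add_distrib, hπcol m, ← Finset.mul_sum, Finset.sum_sub_distrib,
          ← Finset.sum_mul, hμ1, hπcol m]
        ring
    have hent : ∀ n m,
        (C n m * q n m + ε * (q n m * Real.log (q n m) - q n m * (Real.log (μ n * γ m) + 1)))
        ≤ (C n m * π n m + ε * (π n m * Real.log (π n m) - π n m * (Real.log (μ n * γ m) + 1)))
          + (t * (C n m * (μ n * γ m - π n m)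
              + ε * ((μ n * γ m) * Real.log (μ n * γ m) - π n m * Real.log (π n m)
                - (μ n * γ m - π n m) * (Real.log (μ n * γ m) + 1)))
             + (t * Real.log t) * (ε * (if π n m = 0 then μ n * γ m else 0))) := by
      intro n m
      have h1 := eta_seg (hπ0' n m) (hb n m) ht0 ht1
      have h2 := mul_le_mul_of_nonneg_left h1 hε.le
      have hq' : q n m = π n m + t * (μ n * γ m - π n m) := rfl
      rw [hq']
      rcases eq_or_ne (π n m) 0 with h | h
      · rw [if_pos h] at h2 ⊢
        nlinarith [h2]
      · rw [if_neg h] at h2 ⊢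
        nlinarith [h2]
    have hsum : f q ≤ f π + (t * K + (t * Real.log t) * (ε * B0)) := by
      have hle := Finset.sum_le_sum (s := Finset.univ)
        (fun n (_ : n ∈ Finset.univ) => Finset.sum_le_sum (s := Finset.univ)
          (fun m (_ : m ∈ Finset.univ) => hent n m))
      have heq : ∑ n, ∑ m,
          ((C n m * π n m + ε * (π n m * Real.log (π n m) - π n m * (Real.log (μ n * γ m) + 1)))
          + (t * (C n m * (μ n * γ m - π n m)
              + ε * ((μ n * γ m) * Real.log (μ n * γ m) - π n m * Real.log (π n m)
                - (μ n * γ m - π n m) * (Real.log (μ n * γ m) + 1)))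
             + (t * Real.log t) * (ε * (if π n m = 0 then μ n * γ m else 0))))
          = f π + (t * K + (t * Real.log t) * (ε * B0)) := by
        rw [hfdef, hK, hB0]
        simp only [Finset.sum_add_distrib, ← Finset.mul_sum]
      calc f q ≤ _ := hle
        _ = _ := heq
    have hcontra := hπmin q hqS
    have hneg : t * K + (t * Real.log t) * (ε * B0) < 0 := by
      have hc1 : 0 < ε * B0 := mul_pos hε hB0pos
      have h2 : (t * Real.log t) * (ε * B0) ≤ t * (-(|K| + 1)) := by
        have h3 := mul_le_mul_of_nonneg_left hlogt (mul_pos ht0 hc1).le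
        have h4 : t * (ε * B0) * (-(|K| + 1) / (ε * B0)) = t * (-(|K| + 1)) := by
          field_simp
        nlinarith [h3, h4]
      have h3 : t * K ≤ t * |K| := mul_le_mul_of_nonneg_left (le_abs_self K) ht0.le
      nlinarith [h2, h3, ht0]
    linarith
  -- dual potentials from first-order conditions
  set g : Fin N → Fin M → ℝ :=
    fun n m => C n m + ε * (Real.log (π n m) - Real.log (μ n * γ m)) with hgdef
  obtain ⟨c, hcpos, hc⟩ : ∃ c, 0 < c ∧ ∀ n m, c ≤ π n m := by
    obtain ⟨p0, -, hp0min⟩ := Finset.exists_min_image (Finset.univ ×ˢ Finset.univ)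
      (fun p : Fin N × Fin M => π p.1 p.2) ⟨(⟨0, hN⟩, ⟨0, hM⟩), by simp⟩
    exact ⟨π p0.1 p0.2, hπpos _ _, fun n m => hp0min (n, m) (by simp)⟩
  have key : ∀ (n : Fin N) (m : Fin M),
      g n m + g ⟨0, hN⟩ ⟨0, hM⟩ = g n ⟨0, hM⟩ + g ⟨0, hN⟩ m := by
    intro n m
    obtain ⟨δ, hδbound, hδrow, hδcol, hδeval⟩ :=
      exists_delta (ι := Fin N) (κ := Fin M) n ⟨0, hN⟩ m ⟨0, hM⟩
    have hfeas : ∀ s : ℝ, |s| ≤ c / 4 → (fun n' m' => π n' m' + s * δ n' m') ∈ S := by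
      intro s hs
      rw [hmemS]
      refine ⟨fun n' m' => ?_, fun n' => ?_, fun m' => ?_⟩
      · have h1 : |s * δ n' m'| ≤ (c / 4) * 2 := by
          rw [abs_mul]
          exact mul_le_mul hs (hδbound n' m') (abs_nonneg _) (by linarith)
        have h2 := (abs_le.1 h1).1
        have h3 := hc n' m'
        linarith
      · rw [Finset.sum_add_distrib, ← Finset.mul_sum, hδrow n', hπrow n', mul_zero, add_zero]
      · rw [Finset.sum_add_distrib, ← Finset.mul_sum, hδcol m', hπcol m', mul_zero, add_zero]
    have h0eq : (fun n' m' => π n' m' + (0:ℝ) * δ n' m') = π := by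
      funext n' m'; ring
    have hmin0 : IsMinOn (fun s : ℝ => f fun n' m' => π n' m' + s * δ n' m')
        (Metric.closedBall 0 (c / 4)) 0 := by
      rw [isMinOn_iff]
      intro s hs
      show f (fun n' m' => π n' m' + (0:ℝ) * δ n' m') ≤ f fun n' m' => π n' m' + s * δ n' m'
      rw [h0eq]
      refine hπmin _ (hfeas s ?_)
      have := Metric.mem_closedBall.1 hs
      rwa [Real.dist_eq, sub_zero] at this
    have hlm : IsLocalMin (fun s : ℝ => f fun n' m' => π n' m' + s * δ n' m') 0 :=
      hmin0.isLocalMin (Metric.closedBall_mem_nhds 0 (by positivity))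
    have hd : HasDerivAt (fun s : ℝ => f fun n' m' => π n' m' + s * δ n' m')
        (∑ n', ∑ m', δ n' m' * g n' m') 0 := by
      simp only [hfdef]
      apply HasDerivAt.fun_sum
      intro n' _
      apply HasDerivAt.fun_sum
      intro m' _
      have hx : π n' m' ≠ 0 := (hπpos n' m').ne'
      have hl : HasDerivAt (fun s : ℝ => π n' m' + s * δ n' m') (δ n' m') 0 := by
        simpa using ((hasDerivAt_id (0:ℝ)).mul_const (δ n' m')).const_add (π n' m')
      have hml : HasDerivAt
          (fun s : ℝ => (π n' m' + s * δ n' m') * Real.log (π n' m' + s * δ n' m'))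
          ((Real.log (π n' m') + 1) * δ n' m') 0 := by
        have h1 : π n' m' + (0:ℝ) * δ n' m' ≠ 0 := by simpa using hx
        have h2 := (Real.hasDerivAt_mul_log h1).comp 0 hl
        simp only [Function.comp_def] at h2
        convert h2 using 1
        · rfl
        · rfl
        simp
      have hfinal := ((hl.const_mul (C n' m')).add
        (((hml.sub (hl.mul_const (Real.log (μ n' * γ m') + 1)))).const_mul ε))
      convert hfinal using 1
      · rfl
      simp only [hgdef]
      ring
    have hzero := hlm.hasDerivAt_eq_zero hd
    rw [hδeval g] at hzero
    linarith
  set u : Fin N → ℝ := fun n => g n ⟨0, hM⟩ - g ⟨0, hN⟩ ⟨0, hM⟩ with hu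
  set v : Fin M → ℝ := fun m => g ⟨0, hN⟩ m with hv
  have huv : ∀ n m, u n + v m = g n m := by
    intro n m
    rw [hu, hv]
    have := key n m
    simp only
    linarith
  have hrep : ∀ n m, μ n * γ m * Real.exp ((u n + v m - C n m) / ε) = π n m := by
    intro n m
    rw [huv n m]
    have h1 : (g n m - C n m) / ε = Real.log (π n m / (μ n * γ m)) := by
      rw [hgdef]
      simp only
      rw [Real.log_div (hπpos n m).ne' (hb n m).ne']
      field_simp
      ring
    rw [h1, Real.exp_log (div_pos (hπpos n m) (hb n m))]
    rw [mul_div_assoc']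
    exact mul_div_cancel_left₀ _ (hb n m).ne'
  have hweak : ∀ uv : (Fin N → ℝ) × (Fin M → ℝ), ∀ p ∈ S, D uv ≤ f p := by
    intro uv p hp
    rw [hmemS] at hp
    obtain ⟨hp0, hprow, hpcol⟩ := hp
    have e1 : ∑ n, uv.1 n * μ n = ∑ n, ∑ m, uv.1 n * p n m := by
      refine Finset.sum_congr rfl fun n _ => ?_
      rw [← hprow n, Finset.mul_sum]
    have e2 : ∑ m, uv.2 m * γ m = ∑ n, ∑ m, uv.2 m * p n m := by
      have h1 : ∑ m, uv.2 m * γ m = ∑ m, ∑ n, uv.2 m * p n m := by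
        refine Finset.sum_congr rfl fun m _ => ?_
        rw [← hpcol m, Finset.mul_sum]
      rw [h1, Finset.sum_comm]
    rw [hD]
    simp only
    rw [e1, e2, hfdef]
    simp only
    rw [Finset.mul_sum, ← Finset.sum_add_distrib, ← Finset.sum_sub_distrib]
    refine Finset.sum_le_sum fun n _ => ?_
    rw [Finset.mul_sum, ← Finset.sum_add_distrib, ← Finset.sum_sub_distrib]
    refine Finset.sum_le_sum fun m _ => ?_
    have hpw := aux_pw (x := p n m) (b := μ n * γ m)
      (s := (uv.1 n + uv.2 m - C n m) / ε) (hp0 n m) (hb n m)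
    have h2 := mul_le_mul_of_nonneg_left hpw hε.le
    have h3 : ε * (p n m * ((uv.1 n + uv.2 m - C n m) / ε))
        = p n m * (uv.1 n + uv.2 m - C n m) := by
      field_simp
    have h4 : p n m * Real.log (p n m / (μ n * γ m))
        = p n m * Real.log (p n m) - p n m * Real.log (μ n * γ m) := by
      rcases eq_or_ne (p n m) 0 with h | h
      · simp [h]
      · rw [Real.log_div h (hb n m).ne']
        ring
    rw [h3, h4] at h2
    nlinarith [h2]
  have hsum1 : ∑ n, ∑ m, π n m = 1 := by
    calc ∑ n, ∑ m, π n m = ∑ n, μ n := Finset.sum_congr rfl fun n _ => hπrow n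
      _ = 1 := hμ1
  have hfπD : f π = D (u, v) := by
    have e1 : ∀ n m, C n m * π n m
        + ε * (π n m * Real.log (π n m) - π n m * (Real.log (μ n * γ m) + 1))
        = (u n * π n m + v m * π n m) - ε * π n m := by
      intro n m
      have h1 := huv n m
      rw [hgdef] at h1
      simp only at h1
      linear_combination (π n m) * h1.symm
    have a1 : (∑ n, ∑ m, u n * π n m) = ∑ n, u n * μ n :=
      Finset.sum_congr rfl fun n _ => by rw [← Finset.mul_sum, hπrow n]
    have a2 : (∑ n, ∑ m, v m * π n m) = ∑ m, v m * γ m := by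
      rw [Finset.sum_comm]
      exact Finset.sum_congr rfl fun m _ => by rw [← Finset.mul_sum, hπcol m]
    have hL : f π = (∑ n, u n * μ n) + (∑ m, v m * γ m) - ε := by
      rw [hfdef]
      simp only
      calc ∑ n, ∑ m, (C n m * π n m
            + ε * (π n m * Real.log (π n m) - π n m * (Real.log (μ n * γ m) + 1)))
          = ∑ n, ∑ m, ((u n * π n m + v m * π n m) - ε * π n m) :=
            Finset.sum_congr rfl fun n _ => Finset.sum_congr rfl fun m _ => e1 n m
        _ = (∑ n, ∑ m, u n * π n m) + (∑ n, ∑ m, v m * π n m) - ε * ∑ n, ∑ m, π n m := by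
            simp only [Finset.sum_sub_distrib, Finset.sum_add_distrib, ← Finset.mul_sum]
        _ = (∑ n, u n * μ n) + (∑ m, v m * γ m) - ε := by
            rw [hsum1, mul_one, a1, a2]
    have hR : D (u, v) = (∑ n, u n * μ n) + (∑ m, v m * γ m) - ε := by
      rw [hD]
      simp only
      have h1 : (∑ n, ∑ m, μ n * γ m * Real.exp ((u n + v m - C n m) / ε)) = 1 := by
        calc (∑ n, ∑ m, μ n * γ m * Real.exp ((u n + v m - C n m) / ε))
            = ∑ n, ∑ m, π n m :=
              Finset.sum_congr rfl fun n _ => Finset.sum_congr rfl fun m _ => hrep n m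
          _ = 1 := hsum1
      rw [h1, mul_one]
    rw [hL, hR]
  refine ⟨π, ⟨hπ0', hπrow, hπcol⟩, ?_, ?_⟩
  · intro p hp0 hprow hpcol
    rw [hf_eq π, hf_eq p]
    exact hπmin p ((hmemS p).2 ⟨hp0, hprow, hpcol⟩)
  · rw [hf_eq π]
    have hub : ∀ x ∈ Set.range D, x ≤ f π := by
      rintro x ⟨uv, rfl⟩
      exact hweak uv π hπS
    refine le_antisymm ?_ ?_
    · exact le_csSup ⟨f π, hub⟩ ⟨(u, v), hfπD.symm⟩
    · exact csSup_le ⟨D (u, v), Set.mem_range_self _⟩ hub
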